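/- arXiv:2108.01273 — 2 statements merged into one kernel-verified Lean document; each statement's English description precedes it below -/
import Mathlib

section
/- Let r, ψ, f : ℝ → ℝ be non-decreasing and let a, c, b, B ∈ ℝ. Define F(t) = min( sSup { r( ψ(f(x) − b) + t − c − x ) : x ∈ [a, t − c] }, B ) for t ∈ [a + c, ∞). Then F is non-decreasing on [a + c, ∞). (This is Lemma 1's charging-station case in its original form (15): f_{i_k}(t) = min{ max over departure times x of r_{i_k}( r_{i_k}^{−1}(f_{i_{k−1}}(x) − b_{i_{k−1},i_k}) + t − t_{i_{k−1},i_k} − x ), B }, with the inverse charging function r_{i_k}^{−1} replaced by an arbitrary non-decreasing ψ.) -/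
/-- Lemma 1's charging-station case in its original form (15):
`F t = min (sSup {r (ψ (f x - b) + t - c - x) : x ∈ [a, t - c]}) B`
is non-decreasing on `[a + c, ∞)`. -/
theorem stmt_13 (r ψ f : ℝ → ℝ) (hr : Monotone r) (hψ : Monotone ψ)
    (hf : Monotone f) (a c b B : ℝ) :
    MonotoneOn (fun t : ℝ =>
      min (sSup ((fun x => r (ψ (f x - b) + t - c - x)) '' Set.Icc a (t - c))) B)
      (Set.Ici (a + c)) := by
  intro s hs t ht hst
  simp only [Set.mem_Ici] at hs ht
  apply min_le_min _ le_rfl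
  have has : a ≤ s - c := by linarith
  have hat : a ≤ t - c := by linarith
  -- target set is bounded above
  have hbdd : BddAbove ((fun x => r (ψ (f x - b) + t - c - x)) '' Set.Icc a (t - c)) := by
    refine ⟨r (ψ (f (t - c) - b) + t - c - a), ?_⟩
    rintro y ⟨x, ⟨hx1, hx2⟩, rfl⟩
    exact hr (by
      have h1 : ψ (f x - b) ≤ ψ (f (t - c) - b) :=
        hψ (by linarith [hf hx2])
      linarith)
  apply csSup_le
  · exact (Set.nonempty_Icc.mpr has).image _
  · rintro y ⟨x, ⟨hx1, hx2⟩, rfl⟩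
    have hmem : (fun x => r (ψ (f x - b) + t - c - x)) x ∈
        (fun x => r (ψ (f x - b) + t - c - x)) '' Set.Icc a (t - c) :=
      Set.mem_image_of_mem _ ⟨hx1, by linarith⟩
    calc r (ψ (f x - b) + s - c - x) ≤ r (ψ (f x - b) + t - c - x) := hr (by linarith)
      _ ≤ _ := le_csSup hbdd hmem
end

section
/- Let r, ψ, g : ℝ → ℝ be non-decreasing and let c, ρ, b ∈ ℝ. Define G(t) = sInf { r( max( ψ(g(x)) − x + t + c, 0 ) ) : x ∈ [t + c, ρ] } + b for t ∈ (−∞, ρ − c]. Then G is non-decreasing on (−∞, ρ − c]. (This is Lemma 2's charging-station case in its original form (30): g_{i_k}(t) = min over departure times x of r_{i_{k−1}}( max{ r_{i_{k−1}}^{−1}(g_{i_{k−1}}(x)) − x + t + t_{i_k,i_{k−1}}, 0 } ) + b_{i_k,i_{k−1}}, with the inverse charging function r_{i_{k−1}}^{−1} replaced by an arbitrary non-decreasing ψ.) -/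
/-- Lemma 2's charging-station case in its original form (30):
`G t = sInf {r (max (ψ (g x) - x + t + c) 0) : x ∈ [t + c, ρ]} + b`
is non-decreasing on `(-∞, ρ - c]`. -/
theorem stmt_14 (r ψ g : ℝ → ℝ) (hr : Monotone r) (hψ : Monotone ψ)
    (hg : Monotone g) (c ρ b : ℝ) :
    MonotoneOn (fun t : ℝ =>
      sInf ((fun x => r (max (ψ (g x) - x + t + c) 0)) '' Set.Icc (t + c) ρ) + b)
      (Set.Iic (ρ - c)) := by
  intro t₁ h₁ t₂ h₂ hle
  simp only [Set.mem_Iic] at h₁ h₂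
  simp only
  apply add_le_add_left
  apply le_csInf
  · exact (Set.nonempty_Icc.mpr (by linarith)).image _
  · rintro y ⟨x, hx, rfl⟩
    obtain ⟨hx1, hx2⟩ := hx
    refine le_trans (csInf_le ?_ ?_) (hr (max_le_max (by linarith : ψ (g x) - x + t₁ + c ≤ ψ (g x) - x + t₂ + c) le_rfl))
    · exact ⟨r 0, by rintro z ⟨w, _, rfl⟩; exact hr (le_max_right _ _)⟩
    · exact ⟨x, ⟨by linarith, hx2⟩, rfl⟩
end
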